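/- Theorem (population Fréchet mean of inhomogeneous Erdős–Rényi graphs): Let Pr be the inhomogeneous Erdős–Rényi measure on S with edge-probability matrix P. Then the adjacency matrix M defined by M_ij = 1 if p_ij > 1/2 and M_ij = 0 otherwise is a Fréchet mean, i.e., for every B ∈ S, Σ_{A∈S} d_H(A,M)^2 Pr(A) ≤ Σ_{A∈S} d_H(A,B)^2 Pr(A). -/

import Mathlib

open Finset
open scoped Classical

/-- The set of pairs (i,j) with i < j. -/
def pairs (n : ℕ) : Finset (Fin n × Fin n) :=
  Finset.univ.filter (fun q => q.1 < q.2)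

/-- The set `S` of adjacency matrices: symmetric Bool matrices with zero (false) diagonal. -/
noncomputable def adjS (n : ℕ) : Finset (Matrix (Fin n) (Fin n) Bool) :=
  Finset.univ.filter (fun A => (∀ i j, A i j = A j i) ∧ ∀ i, A i i = false)

/-- The real-valued 0/1 entry of an adjacency matrix. -/
noncomputable def val {n : ℕ} (A : Matrix (Fin n) (Fin n) Bool) (i j : Fin n) : ℝ :=
  if A i j then 1 else 0

/-- The Hamming distance between two graphs. -/
noncomputable def dH {n : ℕ} (A B : Matrix (Fin n) (Fin n) Bool) : ℝ :=
  ∑ q ∈ pairs n, |val A q.1 q.2 - val B q.1 q.2|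

/-- The inhomogeneous Erdős–Rényi probability of an adjacency matrix:
`∏_{i<j} p_ij^{a_ij} (1-p_ij)^{1-a_ij}`. -/
noncomputable def erPr {n : ℕ} (p : Fin n → Fin n → ℝ) (A : Matrix (Fin n) (Fin n) Bool) : ℝ :=
  ∏ q ∈ pairs n, if A q.1 q.2 then p q.1 q.2 else 1 - p q.1 q.2

/-- The edge set of a graph: pairs (i,j), i<j, with b_ij = 1. -/
def edges {n : ℕ} (B : Matrix (Fin n) (Fin n) Bool) : Finset (Fin n × Fin n) :=
  (pairs n).filter (fun q => B q.1 q.2 = true)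

lemma mem_pairs' {n : ℕ} {q : Fin n × Fin n} : q ∈ pairs n ↔ q.1 < q.2 := by
  simp [pairs]

noncomputable def fromFun {n : ℕ} (g : ↥(pairs n) → Bool) : Matrix (Fin n) (Fin n) Bool :=
  fun i j => if h : (i, j) ∈ pairs n then g ⟨(i,j), h⟩
    else if h' : (j, i) ∈ pairs n then g ⟨(j,i), h'⟩ else false

lemma fromFun_mem {n : ℕ} (g : ↥(pairs n) → Bool) : fromFun g ∈ adjS n := by
  simp only [adjS, mem_filter, mem_univ, true_and]
  constructor
  · intro i j
    rcases lt_trichotomy i j with h | h | h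
    · have h1 : (i, j) ∈ pairs n := mem_pairs'.2 h
      have h2 : ¬ (j, i) ∈ pairs n := by simp [mem_pairs']; exact le_of_lt h
      simp [fromFun, h1, h2]
    · subst h; rfl
    · have h1 : (j, i) ∈ pairs n := mem_pairs'.2 h
      have h2 : ¬ (i, j) ∈ pairs n := by simp [mem_pairs']; exact le_of_lt h
      simp [fromFun, h1, h2]
  · intro i
    have h2 : ¬ (i, i) ∈ pairs n := by simp [mem_pairs']
    simp [fromFun, h2]

/-- Key independence/factorization lemma. -/
lemma sum_adjS_prod {n : ℕ} (f : Fin n × Fin n → Bool → ℝ) :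
    ∑ A ∈ adjS n, ∏ q ∈ pairs n, f q (A q.1 q.2)
      = ∏ q ∈ pairs n, (f q true + f q false) := by
  have key : ∀ q : ↥(pairs n), (f q true + f q false) = ∑ b : Bool, f q b := by
    intro q; simp [Fintype.sum_bool]
  rw [← Finset.prod_coe_sort (pairs n) (fun q => f q true + f q false)]
  simp_rw [key]
  rw [Fintype.prod_sum (fun (q : ↥(pairs n)) (b : Bool) => f q b)]
  refine Finset.sum_bij' (fun A _ => fun q : ↥(pairs n) => A q.1.1 q.1.2)
    (fun g _ => fromFun g) ?_ ?_ ?_ ?_ ?_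
  · intro A _; exact mem_univ _
  · intro g _; exact fromFun_mem g
  · intro A hA
    simp only [adjS, mem_filter] at hA
    funext i j
    rcases lt_trichotomy i j with h | h | h
    · have h1 : (i, j) ∈ pairs n := mem_pairs'.2 h
      simp [fromFun, h1]
    · subst h
      have h2 : ¬ (i, i) ∈ pairs n := by simp [mem_pairs']
      simp [fromFun, h2, hA.2.2 i]
    · have h1 : (j, i) ∈ pairs n := mem_pairs'.2 h
      have h2 : ¬ (i, j) ∈ pairs n := by simp [mem_pairs']; exact le_of_lt h
      simp [fromFun, h1, h2, hA.2.1 i j]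
  · intro g _
    funext q
    obtain ⟨⟨i,j⟩, hq⟩ := q
    simp [fromFun, hq]
  · intro A hA
    rw [← Finset.prod_coe_sort (pairs n)]

/-- indicator that the edge value `b` differs from `B` at `e`. -/
noncomputable def wt {n : ℕ} (B : Matrix (Fin n) (Fin n) Bool) (e : Fin n × Fin n) (b : Bool) : ℝ :=
  if b = B e.1 e.2 then 0 else 1

/-- the probability that an edge differs from `B` at `e`. -/
noncomputable def qv {n : ℕ} (p : Fin n → Fin n → ℝ) (B : Matrix (Fin n) (Fin n) Bool)
    (e : Fin n × Fin n) : ℝ :=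
  if B e.1 e.2 then 1 - p e.1 e.2 else p e.1 e.2

lemma dH_eq {n : ℕ} (A B : Matrix (Fin n) (Fin n) Bool) :
    dH A B = ∑ q ∈ pairs n, wt B q (A q.1 q.2) := by
  unfold dH
  refine Finset.sum_congr rfl fun q _ => ?_
  unfold wt _root_.val
  by_cases h1 : A q.1 q.2 <;> by_cases h2 : B q.1 q.2 <;> simp [h1, h2]

lemma wt_mul_self {n : ℕ} (B : Matrix (Fin n) (Fin n) Bool) (e : Fin n × Fin n) (b : Bool) :
    wt B e b * wt B e b = wt B e b := by
  unfold wt; split <;> norm_num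

lemma E1 {n : ℕ} (p : Fin n → Fin n → ℝ) (B : Matrix (Fin n) (Fin n) Bool)
    {e : Fin n × Fin n} (he : e ∈ pairs n) :
    ∑ A ∈ adjS n, wt B e (A e.1 e.2) * erPr p A = qv p B e := by
  have h1 : ∀ A : Matrix (Fin n) (Fin n) Bool, wt B e (A e.1 e.2) * erPr p A
      = ∏ q ∈ pairs n, ((if q = e then wt B q (A q.1 q.2) else 1) *
          (if A q.1 q.2 then p q.1 q.2 else 1 - p q.1 q.2)) := by
    intro A
    rw [Finset.prod_mul_distrib, Finset.prod_ite_eq' (pairs n) e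
      (fun q => wt B q (A q.1 q.2))]
    simp [he, erPr]
  simp_rw [h1]
  rw [sum_adjS_prod (fun q b => (if q = e then wt B q b else 1) *
    (if b then p q.1 q.2 else 1 - p q.1 q.2))]
  rw [Finset.prod_eq_single_of_mem e he]
  · simp only [if_pos rfl]
    unfold wt qv
    by_cases hB : B e.1 e.2 <;> simp [hB]
  · intro q hq hne
    simp [hne]

lemma E2 {n : ℕ} (p : Fin n → Fin n → ℝ) (B : Matrix (Fin n) (Fin n) Bool)
    {e f : Fin n × Fin n} (he : e ∈ pairs n) (hf : f ∈ pairs n) (hef : e ≠ f) :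
    ∑ A ∈ adjS n, wt B e (A e.1 e.2) * wt B f (A f.1 f.2) * erPr p A
      = qv p B e * qv p B f := by
  have h1 : ∀ A : Matrix (Fin n) (Fin n) Bool,
      wt B e (A e.1 e.2) * wt B f (A f.1 f.2) * erPr p A
      = ∏ q ∈ pairs n, ((if q = e then wt B q (A q.1 q.2) else 1) *
          ((if q = f then wt B q (A q.1 q.2) else 1) *
          (if A q.1 q.2 then p q.1 q.2 else 1 - p q.1 q.2))) := by
    intro A
    rw [Finset.prod_mul_distrib, Finset.prod_mul_distrib,
      Finset.prod_ite_eq' (pairs n) e (fun q => wt B q (A q.1 q.2)),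
      Finset.prod_ite_eq' (pairs n) f (fun q => wt B q (A q.1 q.2))]
    simp [he, hf, erPr, mul_assoc]
  simp_rw [h1]
  rw [sum_adjS_prod (fun q b => (if q = e then wt B q b else 1) *
    ((if q = f then wt B q b else 1) * (if b then p q.1 q.2 else 1 - p q.1 q.2)))]
  set H : Fin n × Fin n → ℝ := fun q =>
    (if q = e then wt B q true else 1) * ((if q = f then wt B q true else 1) * p q.1 q.2) +
    (if q = e then wt B q false else 1) * ((if q = f then wt B q false else 1) * (1 - p q.1 q.2))
    with hH
  have hfe : f ∈ (pairs n).erase e := Finset.mem_erase.2 ⟨Ne.symm hef, hf⟩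
  have hHe : H e = qv p B e := by
    unfold H
    unfold wt qv
    by_cases hB : B e.1 e.2 <;> simp [hef, hB]
  have hHf : H f = qv p B f := by
    unfold H
    unfold wt qv
    by_cases hB : B f.1 f.2 <;> simp [Ne.symm hef, hB]
  calc ∏ q ∈ pairs n, H q = H e * ∏ q ∈ (pairs n).erase e, H q :=
        (Finset.mul_prod_erase _ _ he).symm
    _ = H e * (H f * ∏ q ∈ ((pairs n).erase e).erase f, H q) := by
        rw [Finset.mul_prod_erase _ _ hfe]
    _ = qv p B e * qv p B f := by
        rw [hHe, hHf]
        have : ∏ q ∈ ((pairs n).erase e).erase f, H q = 1 := by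
          refine Finset.prod_eq_one fun q hq => ?_
          have hq1 : q ≠ f := (Finset.mem_erase.1 hq).1
          have hq2 : q ≠ e := (Finset.mem_erase.1 (Finset.mem_erase.1 hq).2).1
          unfold H
          simp [hq1, hq2]
        rw [this, mul_one]

lemma expect {n : ℕ} (p : Fin n → Fin n → ℝ) (B : Matrix (Fin n) (Fin n) Bool) :
    ∑ A ∈ adjS n, dH A B ^ 2 * erPr p A
      = (∑ e ∈ pairs n, qv p B e) ^ 2
        + ∑ e ∈ pairs n, (qv p B e - qv p B e ^ 2) := by
  have step1 : ∑ A ∈ adjS n, dH A B ^ 2 * erPr p A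
      = ∑ e ∈ pairs n, ∑ f ∈ pairs n, ∑ A ∈ adjS n,
          wt B e (A e.1 e.2) * wt B f (A f.1 f.2) * erPr p A := by
    simp_rw [dH_eq, sq, Finset.sum_mul_sum, Finset.sum_mul]
    rw [Finset.sum_comm]
    exact Finset.sum_congr rfl fun e _ => Finset.sum_comm
  rw [step1]
  have step2 : ∀ e ∈ pairs n, ∀ f ∈ pairs n,
      ∑ A ∈ adjS n, wt B e (A e.1 e.2) * wt B f (A f.1 f.2) * erPr p A
        = if e = f then qv p B e else qv p B e * qv p B f := by
    intro e he f hf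
    by_cases hef : e = f
    · subst hef
      simp only [if_pos rfl]
      simp_rw [wt_mul_self]
      exact E1 p B he
    · rw [if_neg hef]
      exact E2 p B he hf hef
  rw [Finset.sum_congr rfl fun e he => Finset.sum_congr rfl fun f hf => step2 e he f hf]
  have step3 : ∀ e ∈ pairs n,
      ∑ f ∈ pairs n, (if e = f then qv p B e else qv p B e * qv p B f)
        = qv p B e * (∑ f ∈ pairs n, qv p B f) + (qv p B e - qv p B e ^ 2) := by
    intro e he
    have : ∀ f, (if e = f then qv p B e else qv p B e * qv p B f)
        = qv p B e * qv p B f + (if e = f then qv p B e - qv p B e ^ 2 else 0) := by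
      intro f
      by_cases h : e = f
      · subst h; simp; ring
      · simp [h]
    simp_rw [this]
    rw [Finset.sum_add_distrib, ← Finset.mul_sum, Finset.sum_ite_eq (pairs n) e, if_pos he]
  rw [Finset.sum_congr rfl step3, Finset.sum_add_distrib, ← Finset.sum_mul, sq]

theorem stmt7 (n : ℕ) (p : Fin n → Fin n → ℝ)
    (hp : ∀ i j, 0 ≤ p i j ∧ p i j ≤ 1) (hsym : ∀ i j, p i j = p j i)
    (hdiag : ∀ i, p i i = 0)
    (M : Matrix (Fin n) (Fin n) Bool)
    (hM : ∀ i j, M i j = true ↔ 1 / 2 < p i j) :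
    ∀ B ∈ adjS n,
      ∑ A ∈ adjS n, (dH A M) ^ 2 * erPr p A ≤ ∑ A ∈ adjS n, (dH A B) ^ 2 * erPr p A := by
  intro B _
  rw [expect p M, expect p B]
  have hC : ∑ e ∈ pairs n, (qv p M e - qv p M e ^ 2)
      = ∑ e ∈ pairs n, (qv p B e - qv p B e ^ 2) := by
    refine Finset.sum_congr rfl fun e _ => ?_
    unfold qv
    by_cases hMe : M e.1 e.2 <;> by_cases hBe : B e.1 e.2 <;> simp [hMe, hBe] <;> ring
  have h0 : ∀ e ∈ pairs n, 0 ≤ qv p M e := by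
    intro e _
    unfold qv
    by_cases hMe : M e.1 e.2 <;> simp [hMe]
    · linarith [(hp e.1 e.2).2]
    · exact (hp e.1 e.2).1
  have hle : ∀ e ∈ pairs n, qv p M e ≤ qv p B e := by
    intro e _
    unfold qv
    by_cases hMe : M e.1 e.2 <;> by_cases hBe : B e.1 e.2 <;> simp [hMe, hBe]
    · have := (hM e.1 e.2).1 hMe
      linarith
    · have : ¬ (1/2 < p e.1 e.2) := fun h => hMe ((hM e.1 e.2).2 h)
      push_neg at this
      linarith
  rw [hC]
  have hsle : ∑ e ∈ pairs n, qv p M e ≤ ∑ e ∈ pairs n, qv p B e :=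
    Finset.sum_le_sum hle
  have hs0 : 0 ≤ ∑ e ∈ pairs n, qv p M e := Finset.sum_nonneg h0
  have := pow_le_pow_left₀ hs0 hsle 2
  linarith
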